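/- Let (T,r) be a rooted tree and let u and v be two vertices of T at the same level. Then cdl(u) = cdl(v) if and only if the rooted subtree of descendants of u (the subgraph of T induced on the descendants of u, rooted at u) is isomorphic, as a rooted tree, to the rooted subtree of descendants of v. -/

import Mathlib

attribute [local instance] Classical.propDecidable

namespace AHU

variable {V : Type*}

/-- The height of the rooted tree `(G, r)`: maximum distance from the root. -/
noncomputable def height (G : SimpleGraph V) [Fintype V] (r : V) : ℕ :=
  Finset.univ.sup fun v => G.dist r v

/-- The level of a vertex: height minus distance from the root. -/
noncomputable def lvl (G : SimpleGraph V) [Fintype V] (r : V) (v : V) : ℕ :=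
  height G r - G.dist r v

/-- `T_i`: the set of vertices at level `i`. -/
noncomputable def levelSet (G : SimpleGraph V) [Fintype V] (r : V) (i : ℕ) : Finset V :=
  Finset.univ.filter fun v => lvl G r v = i

/-- A vertex is a leaf if it has degree at most one. -/
def IsLeaf (G : SimpleGraph V) (v : V) : Prop :=
  {u | G.Adj v u}.ncard ≤ 1

/-- The parent of `v ≠ r`: the unique neighbour of `v` lying closer to the root
(on the unique path from `r` to `v`).  For `v = r` we return `v` itself. -/
noncomputable def parent (G : SimpleGraph V) (r v : V) : V :=
  if h : ∃ p, G.Adj p v ∧ G.dist r p + 1 = G.dist r v then h.choose else v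

/-- The set of children of `u`. -/
noncomputable def children (G : SimpleGraph V) [Fintype V] (r u : V) : Finset V :=
  Finset.univ.filter fun v => v ≠ r ∧ parent G r v = u

/-- The label-compression of a finite set `S` of tuples: the unique order isomorphism
from `(S, ≤lex)` onto `{0, …, |S| - 1}`, i.e. `s ↦ #{t ∈ S | t <lex s}`. -/
noncomputable def compress (S : Finset (List ℕ)) (s : List ℕ) : ℕ :=
  (S.filter fun t => List.Lex (· < ·) t s).card

/-- Auxiliary, level-indexed version of the compressed descendant labeling:
`labelAt G r i v` is the label of a vertex `v` of level `i`. -/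
noncomputable def labelAt (G : SimpleGraph V) [Fintype V] (r : V) : ℕ → V → List ℕ
  | 0, _ => []
  | (i + 1), v =>
      if IsLeaf G v then []
      else
        Multiset.sort
          ((children G r v).val.map fun u =>
            compress ((levelSet G r i).image (labelAt G r i)) (labelAt G r i u)) (· ≤ ·)

/-- The compressed descendant labeling `cdl : V(T) → ℕ*`. -/
noncomputable def cdl (G : SimpleGraph V) [Fintype V] (r : V) (v : V) : List ℕ :=
  labelAt G r (lvl G r v) v

/-- `𝓛(W)`: the multiset of compressed descendant labels of the vertices of `W`. -/
noncomputable def labels (G : SimpleGraph V) [Fintype V] (r : V) (W : Finset V) :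
    Multiset (List ℕ) :=
  W.val.map (cdl G r)

/-- The level-label condition: the multisets of labels agree on every level
`i = 0, 1, …, max(height T, height T')`. -/
noncomputable def LevelLabelCondition {V' : Type*} (G : SimpleGraph V) [Fintype V] (r : V)
    (G' : SimpleGraph V') [Fintype V'] (r' : V') : Prop :=
  ∀ i ≤ max (height G r) (height G' r' ),
    labels G r (levelSet G r i) = labels G' r' (levelSet G' r' i)


/-- The set of descendants of `u`: the vertices `w` such that `u` lies on the unique
path from the root `r` to `w` (in a tree, equivalently, `dist r u + dist u w = dist r w`).
In particular `u` is a descendant of itself. -/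
def descendants (G : SimpleGraph V) (r u : V) : Set V :=
  {w | G.dist r u + G.dist u w = G.dist r w}

lemma self_mem_descendants (G : SimpleGraph V) (r u : V) : u ∈ descendants G r u := by
  simp [descendants]


section TreeAux

variable {G : SimpleGraph V} {r : V}

/-- The unique path between two vertices of a tree. -/
noncomputable def geo (hT : G.IsTree) (x y : V) : G.Walk x y :=
  (hT.existsUnique_path x y).choose

lemma geo_isPath (hT : G.IsTree) (x y : V) : (geo hT x y).IsPath :=
  (hT.existsUnique_path x y).choose_spec.1

lemma eq_geo (hT : G.IsTree) {x y : V} (p : G.Walk x y) (hp : p.IsPath) : p = geo hT x y := by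
  have h2 := (hT.existsUnique_path x y).choose_spec.2
  exact h2 p hp

lemma geo_length (hT : G.IsTree) (x y : V) : (geo hT x y).length = G.dist x y := by
  obtain ⟨w, hw⟩ := hT.isConnected.exists_walk_length_eq_dist x y
  have hb : w.bypass = geo hT x y := eq_geo hT _ w.bypass_isPath
  have h1 : (geo hT x y).length ≤ G.dist x y := by
    rw [← hb, ← hw]; exact w.length_bypass_le
  exact le_antisymm h1 (SimpleGraph.dist_le _)

/-- Splitting a geodesic walk at a vertex on it: distances add up. -/
lemma dist_add_of_mem_geodesic (hT : G.IsTree) {x y b : V} {w : G.Walk x y}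
    (hw : w.length = G.dist x y) (hb : b ∈ w.support) :
    G.dist x b = (w.takeUntil b hb).length ∧ G.dist b y = (w.dropUntil b hb).length := by
  have hsplit : (w.takeUntil b hb).length + (w.dropUntil b hb).length = w.length := by
    rw [← SimpleGraph.Walk.length_append, SimpleGraph.Walk.take_spec]
  have h1 : G.dist x b ≤ (w.takeUntil b hb).length := SimpleGraph.dist_le _
  have h2 : G.dist b y ≤ (w.dropUntil b hb).length := SimpleGraph.dist_le _
  have h3 : G.dist x y ≤ G.dist x b + G.dist b y := hT.isConnected.dist_triangle
  omega

lemma dist_add_of_mem_support (hT : G.IsTree) {x y b : V} {w : G.Walk x y}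
    (hw : w.length = G.dist x y) (hb : b ∈ w.support) :
    G.dist x b + G.dist b y = G.dist x y := by
  obtain ⟨h1, h2⟩ := dist_add_of_mem_geodesic hT hw hb
  have hsplit : (w.takeUntil b hb).length + (w.dropUntil b hb).length = w.length := by
    rw [← SimpleGraph.Walk.length_append, SimpleGraph.Walk.take_spec]
  omega



lemma mem_geo_of_dist_add (hT : G.IsTree) {x y b : V}
    (h : G.dist x b + G.dist b y = G.dist x y) : b ∈ (geo hT x y).support := by
  have h1 := geo_length hT x b
  have h2 := geo_length hT b y
  have hpath : ((geo hT x b).append (geo hT b y)).IsPath := by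
    rw [SimpleGraph.Walk.isPath_def, SimpleGraph.Walk.support_append, List.nodup_append]
    refine ⟨(geo_isPath hT x b).support_nodup,
      ((geo_isPath hT b y).support_nodup).sublist (List.tail_sublist _), ?_⟩
    intro z hz1 z' hz2 hzz
    subst hzz
    have hz2' : z ∈ (geo hT b y).support := List.mem_of_mem_tail hz2
    have e1 : G.dist x z + G.dist z b = G.dist x b :=
      dist_add_of_mem_support hT h1 hz1
    have e2 : G.dist b z + G.dist z y = G.dist b y :=
      dist_add_of_mem_support hT h2 hz2'
    have e3 : G.dist x y ≤ G.dist x z + G.dist z y := hT.isConnected.dist_triangle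
    have e4 : G.dist z b = G.dist b z := SimpleGraph.dist_comm
    have e5 : G.dist b z = 0 := by omega
    have : b = z := (hT.isConnected.dist_eq_zero_iff).mp e5
    subst this
    have := ((geo hT b y).support_eq_cons ▸ (geo_isPath hT b y).support_nodup)
    exact (List.nodup_cons.mp this).1 hz2
  have heq : (geo hT x b).append (geo hT b y) = geo hT x y := eq_geo hT _ hpath
  rw [← heq, SimpleGraph.Walk.mem_support_append_iff]
  exact Or.inl ((geo hT x b).end_mem_support)

lemma mem_geo_iff_dist_add (hT : G.IsTree) {x y b : V} :
    b ∈ (geo hT x y).support ↔ G.dist x b + G.dist b y = G.dist x y :=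
  ⟨fun hb => dist_add_of_mem_support hT (geo_length hT x y) hb, mem_geo_of_dist_add hT⟩

/-- On the unique path from `x` to `y`, a vertex is determined by its distance from `x`. -/
lemma eq_of_mem_geo_of_dist_eq (hT : G.IsTree) {x y a b : V}
    (ha : a ∈ (geo hT x y).support) (hb : b ∈ (geo hT x y).support)
    (hd : G.dist x a = G.dist x b) : a = b := by
  have hlen := geo_length hT x y
  have htake : G.dist x b = ((geo hT x y).takeUntil b hb).length :=
    (dist_add_of_mem_geodesic hT hlen hb).1
  have hdrop : G.dist b y = ((geo hT x y).dropUntil b hb).length :=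
    (dist_add_of_mem_geodesic hT hlen hb).2
  have hxy : G.dist x b + G.dist b y = G.dist x y := dist_add_of_mem_support hT hlen hb
  have hxa : G.dist x a + G.dist a y = G.dist x y := dist_add_of_mem_support hT hlen ha
  rw [← (geo hT x y).take_spec hb, SimpleGraph.Walk.mem_support_append_iff] at ha
  rcases ha with ha | ha
  · have e1 : G.dist x a + G.dist a b = G.dist x b :=
      dist_add_of_mem_support hT htake.symm ha
    have : G.dist a b = 0 := by omega
    exact (hT.isConnected.dist_eq_zero_iff).mp this |>.symm ▸ rfl
  · have e1 : G.dist b a + G.dist a y = G.dist b y :=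
      dist_add_of_mem_support hT hdrop.symm ha
    have : G.dist b a = 0 := by omega
    exact ((hT.isConnected.dist_eq_zero_iff).mp this).symm

/-- Adjacent vertices have distances from `r` differing by exactly one. -/
lemma adj_dist_cases (hT : G.IsTree) {a b : V} (h : G.Adj a b) (r : V) :
    G.dist r b = G.dist r a + 1 ∨ G.dist r a = G.dist r b + 1 := by
  by_cases hb : b ∈ (geo hT r a).support
  · right
    have e1 : G.dist r b + G.dist b a = G.dist r a :=
      dist_add_of_mem_support hT (geo_length hT r a) hb
    have e2 : G.dist b a = 1 := SimpleGraph.dist_eq_one_iff_adj.mpr h.symm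
    omega
  · left
    have hpath : ((geo hT r a).concat h).IsPath := by
      rw [SimpleGraph.Walk.isPath_def, SimpleGraph.Walk.concat_eq_append,
        SimpleGraph.Walk.support_append, List.nodup_append]
      refine ⟨(geo_isPath hT r a).support_nodup, by simp, ?_⟩
      intro z hz1 z' hz2 hzz
      subst hzz
      simp only [SimpleGraph.Walk.support_cons, SimpleGraph.Walk.support_nil,
        List.tail_cons, List.mem_singleton] at hz2
      subst hz2
      exact absurd hz1 hb
    have heq : (geo hT r a).concat h = geo hT r b := eq_geo hT _ hpath
    have := geo_length hT r b
    rw [← heq, SimpleGraph.Walk.length_concat, geo_length hT r a] at this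
    omega


lemma exists_parent (hT : G.IsTree) {v : V} (hv : v ≠ r) :
    ∃ p, G.Adj p v ∧ G.dist r p + 1 = G.dist r v := by
  have hd : 0 < G.dist r v := hT.isConnected.pos_dist_of_ne (fun h => hv h.symm)
  have hl : (geo hT r v).reverse.length = G.dist r v := by
    rw [SimpleGraph.Walk.length_reverse, geo_length]
  have hnn : ¬ (geo hT r v).reverse.Nil := by
    rw [SimpleGraph.Walk.nil_iff_length_eq]; omega
  obtain ⟨p, hadj, q, hq⟩ := SimpleGraph.Walk.not_nil_iff.mp hnn
  refine ⟨p, hadj.symm, ?_⟩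
  have h1 : G.dist p r ≤ q.length := SimpleGraph.dist_le q
  have h2 : q.length + 1 = G.dist r v := by
    rw [← hl, hq, SimpleGraph.Walk.length_cons]
  have hpv : G.dist p v = 1 := SimpleGraph.dist_eq_one_iff_adj.mpr hadj.symm
  have h3 : G.dist r v ≤ G.dist r p + G.dist p v := hT.isConnected.dist_triangle
  have h4 : G.dist r p = G.dist p r := SimpleGraph.dist_comm
  omega

lemma parent_unique (hT : G.IsTree) {v p p' : V}
    (h1 : G.Adj p v) (h2 : G.dist r p + 1 = G.dist r v)
    (h1' : G.Adj p' v) (h2' : G.dist r p' + 1 = G.dist r v) : p = p' := by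
  have hpv : G.dist p v = 1 := SimpleGraph.dist_eq_one_iff_adj.mpr h1
  have hpv' : G.dist p' v = 1 := SimpleGraph.dist_eq_one_iff_adj.mpr h1'
  have hp : p ∈ (geo hT r v).support := mem_geo_of_dist_add hT (by omega)
  have hp' : p' ∈ (geo hT r v).support := mem_geo_of_dist_add hT (by omega)
  exact eq_of_mem_geo_of_dist_eq hT hp hp' (by omega)

lemma parent_eq (hT : G.IsTree) {v p : V}
    (h1 : G.Adj p v) (h2 : G.dist r p + 1 = G.dist r v) : parent G r v = p := by
  rw [parent]
  have hex : ∃ q, G.Adj q v ∧ G.dist r q + 1 = G.dist r v := ⟨p, h1, h2⟩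
  rw [dif_pos hex]
  exact parent_unique hT hex.choose_spec.1 hex.choose_spec.2 h1 h2

lemma parent_spec (hT : G.IsTree) {v : V} (hv : v ≠ r) :
    G.Adj (parent G r v) v ∧ G.dist r (parent G r v) + 1 = G.dist r v := by
  obtain ⟨p, h1, h2⟩ := exists_parent hT hv
  rw [parent_eq hT h1 h2]
  exact ⟨h1, h2⟩

lemma mem_children [Fintype V] (hT : G.IsTree) {u c : V} :
    c ∈ children G r u ↔ c ≠ r ∧ G.Adj u c ∧ G.dist r c = G.dist r u + 1 := by
  simp only [children, Finset.mem_filter, Finset.mem_univ, true_and]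
  constructor
  · rintro ⟨hc, hp⟩
    obtain ⟨h1, h2⟩ := parent_spec hT hc
    rw [hp] at h1 h2
    exact ⟨hc, h1, by omega⟩
  · rintro ⟨hc, h1, h2⟩
    exact ⟨hc, parent_eq hT h1 (by omega)⟩

lemma mem_descendants {u w : V} :
    w ∈ descendants G r u ↔ G.dist r u + G.dist u w = G.dist r w := Iff.rfl

lemma desc_trans (hT : G.IsTree) {u w x : V}
    (hw : w ∈ descendants G r u) (hx : x ∈ descendants G r w) :
    x ∈ descendants G r u ∧ G.dist u w + G.dist w x = G.dist u x := by
  rw [mem_descendants] at *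
  have t1 : G.dist u x ≤ G.dist u w + G.dist w x := hT.isConnected.dist_triangle
  have t2 : G.dist r x ≤ G.dist r u + G.dist u x := hT.isConnected.dist_triangle
  omega

lemma child_mem_desc [Fintype V] (hT : G.IsTree) {u c : V} (hc : c ∈ children G r u) :
    c ∈ descendants G r u := by
  obtain ⟨_, h1, h2⟩ := (mem_children hT).mp hc
  rw [mem_descendants, SimpleGraph.dist_eq_one_iff_adj.mpr h1]
  omega

lemma desc_subset [Fintype V] (hT : G.IsTree) {u c : V} (hc : c ∈ children G r u) :
    descendants G r c ⊆ descendants G r u :=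
  fun _ hx => (desc_trans hT (child_mem_desc hT hc) hx).1

lemma desc_child_of_ne [Fintype V] (hT : G.IsTree) {u w : V}
    (hw : w ∈ descendants G r u) (hne : w ≠ u) :
    ∃ c ∈ children G r u, w ∈ descendants G r c := by
  rw [mem_descendants] at hw
  have hd : 0 < G.dist u w := hT.isConnected.pos_dist_of_ne (fun h => hne h.symm)
  have hl : (geo hT u w).length = G.dist u w := geo_length hT u w
  have hnn : ¬ (geo hT u w).Nil := by
    rw [SimpleGraph.Walk.nil_iff_length_eq]; omega
  obtain ⟨c, hadj, q, hq⟩ := SimpleGraph.Walk.not_nil_iff.mp hnn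
  have h1 : G.dist c w ≤ q.length := SimpleGraph.dist_le q
  have h2 : q.length + 1 = G.dist u w := by
    rw [← hl, hq, SimpleGraph.Walk.length_cons]
  have huc : G.dist u c = 1 := SimpleGraph.dist_eq_one_iff_adj.mpr hadj
  have h3 : G.dist u w ≤ G.dist u c + G.dist c w := hT.isConnected.dist_triangle
  have hcw : G.dist c w + 1 = G.dist u w := by omega
  have t1 : G.dist r c ≤ G.dist r u + G.dist u c := hT.isConnected.dist_triangle
  have t2 : G.dist r w ≤ G.dist r c + G.dist c w := hT.isConnected.dist_triangle
  have hrc : G.dist r c = G.dist r u + 1 := by omega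
  have hcr : c ≠ r := by
    intro h; subst h
    rw [SimpleGraph.dist_self] at hrc; omega
  refine ⟨c, (mem_children hT).mpr ⟨hcr, hadj, hrc⟩, ?_⟩
  rw [mem_descendants]; omega

lemma desc_unique_child [Fintype V] (hT : G.IsTree) {u w c c' : V}
    (hc : c ∈ children G r u) (hc' : c' ∈ children G r u)
    (hwc : w ∈ descendants G r c) (hwc' : w ∈ descendants G r c') : c = c' := by
  rw [mem_descendants] at hwc hwc'
  have h1 : G.dist r c = G.dist r u + 1 := ((mem_children hT).mp hc).2.2
  have h2 : G.dist r c' = G.dist r u + 1 := ((mem_children hT).mp hc').2.2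
  have hp : c ∈ (geo hT r w).support := mem_geo_of_dist_add hT (by omega)
  have hp' : c' ∈ (geo hT r w).support := mem_geo_of_dist_add hT (by omega)
  exact eq_of_mem_geo_of_dist_eq hT hp hp' (by omega)

lemma support_geo_subset_desc (hT : G.IsTree) {c w z : V}
    (hw : w ∈ descendants G r c) (hz : z ∈ (geo hT c w).support) :
    z ∈ descendants G r c := by
  rw [mem_descendants] at *
  have h1 : G.dist c z + G.dist z w = G.dist c w := (mem_geo_iff_dist_add hT).mp hz
  have t1 : G.dist r z ≤ G.dist r c + G.dist c z := hT.isConnected.dist_triangle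
  have t2 : G.dist r w ≤ G.dist r z + G.dist z w := hT.isConnected.dist_triangle
  omega

lemma adj_structure [Fintype V] (hT : G.IsTree) {u w x : V}
    (hw : w ∈ descendants G r u) (hx : x ∈ descendants G r u) (hadj : G.Adj w x) :
    (w = u ∧ x ∈ children G r u) ∨ (x = u ∧ w ∈ children G r u) ∨
      (∃ c ∈ children G r u, w ∈ descendants G r c ∧ x ∈ descendants G r c) := by
  have key : ∀ w x : V, w ∈ descendants G r u → x ∈ descendants G r u → G.Adj w x →
      G.dist r x = G.dist r w + 1 →
      (w = u ∧ x ∈ children G r u) ∨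
        (∃ c ∈ children G r u, w ∈ descendants G r c ∧ x ∈ descendants G r c) := by
    intro w x hw hx hadj hdist
    have hxw : x ∈ descendants G r w := by
      rw [mem_descendants, SimpleGraph.dist_eq_one_iff_adj.mpr hadj]
      omega
    by_cases hwu : w = u
    · subst hwu
      left
      refine ⟨rfl, (mem_children hT).mpr ⟨?_, hadj, hdist⟩⟩
      intro h; subst h
      rw [SimpleGraph.dist_self] at hdist
      rw [mem_descendants] at hw
      omega
    · right
      obtain ⟨c, hc, hwc⟩ := desc_child_of_ne hT hw hwu
      exact ⟨c, hc, hwc, (desc_trans hT hwc hxw).1⟩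
  rcases adj_dist_cases hT hadj r with hd | hd
  · rcases key w x hw hx hadj hd with h | h
    · exact Or.inl h
    · exact Or.inr (Or.inr h)
  · rcases key x w hx hw hadj.symm hd with h | h
    · exact Or.inr (Or.inl h)
    · obtain ⟨c, hc, h1, h2⟩ := h
      exact Or.inr (Or.inr ⟨c, hc, h2, h1⟩)


lemma dist_root_le_of_mem_desc {u w : V} (h : w ∈ descendants G r u) :
    G.dist r u ≤ G.dist r w := by
  rw [mem_descendants] at h; omega

lemma ne_of_mem_desc_child [Fintype V] (hT : G.IsTree) {u c w : V}
    (hc : c ∈ children G r u) (hw : w ∈ descendants G r c) : w ≠ u := by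
  intro h
  have h1 : G.dist r c = G.dist r u + 1 := ((mem_children hT).mp hc).2.2
  have h2 := dist_root_le_of_mem_desc hw
  rw [h] at h2
  omega

/-- Rooted-isomorphism data between the descendant subtrees of `u` and `v`. -/
structure IsRIso (G : SimpleGraph V) (r u v : V) (f g : V → V) : Prop where
  root : f u = v
  mapsTo : Set.MapsTo f (descendants G r u) (descendants G r v)
  mapsTo' : Set.MapsTo g (descendants G r v) (descendants G r u)
  leftInv : ∀ w ∈ descendants G r u, g (f w) = w
  rightInv : ∀ x ∈ descendants G r v, f (g x) = x
  pres : ∀ w ∈ descendants G r u, ∀ x ∈ descendants G r u, G.Adj w x → G.Adj (f w) (f x)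
  pres' : ∀ w ∈ descendants G r v, ∀ x ∈ descendants G r v, G.Adj w x → G.Adj (g w) (g x)

/-- The rooted subtrees of descendants of `u` and of `v` are isomorphic. -/
def RIso (G : SimpleGraph V) (r u v : V) : Prop :=
  ∃ f g : V → V, IsRIso G r u v f g

lemma IsRIso.symm {u v : V} {f g : V → V} (h : IsRIso G r u v f g) :
    IsRIso G r v u g f where
  root := by rw [← h.root, h.leftInv u (self_mem_descendants G r u)]
  mapsTo := h.mapsTo'
  mapsTo' := h.mapsTo
  leftInv := h.rightInv
  rightInv := h.leftInv
  pres := h.pres'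
  pres' := h.pres

lemma RIso.symm {u v : V} (h : RIso G r u v) : RIso G r v u := by
  obtain ⟨f, g, h⟩ := h; exact ⟨g, f, h.symm⟩

lemma riso_refl (u : V) : RIso G r u u :=
  ⟨id, id, rfl, fun _ h => h, fun _ h => h, fun _ _ => rfl, fun _ _ => rfl,
    fun _ _ _ _ h => h, fun _ _ _ _ h => h⟩

lemma riso_of_singletons {u v : V} (hu : descendants G r u = {u})
    (hv : descendants G r v = {v}) : RIso G r u v := by
  refine ⟨fun _ => v, fun _ => u, rfl, ?_, ?_, ?_, ?_, ?_, ?_⟩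
  · intro w _; exact self_mem_descendants G r v
  · intro w _; exact self_mem_descendants G r u
  · intro w hw; rw [hu] at hw; exact hw.symm
  · intro x hx; rw [hv] at hx; exact hx.symm
  · intro w hw x hx hadj
    rw [hu, Set.mem_singleton_iff] at hw hx
    subst hw; subst hx
    exact absurd hadj (G.irrefl)
  · intro w hw x hx hadj
    rw [hv, Set.mem_singleton_iff] at hw hx
    subst hw; subst hx
    exact absurd hadj (G.irrefl)

lemma IsRIso.desc_singleton {u v : V} {f g : V → V} (h : IsRIso G r u v f g)
    (hu : descendants G r u = {u}) : descendants G r v = {v} := by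
  apply Set.eq_singleton_iff_unique_mem.mpr
  refine ⟨self_mem_descendants G r v, fun x hx => ?_⟩
  have h1 : g x ∈ descendants G r u := h.mapsTo' hx
  rw [hu] at h1
  have := h.rightInv x hx
  rw [h1] at this
  rw [← this, h.root]

lemma map_walk_dist (hT : G.IsTree) {D : Set V} {f : V → V}
    (hpres : ∀ w ∈ D, ∀ x ∈ D, G.Adj w x → G.Adj (f w) (f x)) :
    ∀ {a b : V} (W : G.Walk a b), (∀ z ∈ W.support, z ∈ D) →
      G.dist (f a) (f b) ≤ W.length := by
  intro a b W
  induction W with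
  | nil => intro _; simp [SimpleGraph.dist_self]
  | @cons a c b h q ih =>
    intro hsub
    have ha : a ∈ D := hsub a (SimpleGraph.Walk.start_mem_support _)
    have hc : c ∈ D := hsub c (by
      rw [SimpleGraph.Walk.support_cons]
      exact List.mem_cons_of_mem _ q.start_mem_support)
    have h1 : G.Adj (f a) (f c) := hpres a ha c hc h
    have h2 : G.dist (f c) (f b) ≤ q.length := ih (fun z hz => hsub z (by
      rw [SimpleGraph.Walk.support_cons]
      exact List.mem_cons_of_mem _ hz))
    have h3 : G.dist (f a) (f b) ≤ G.dist (f a) (f c) + G.dist (f c) (f b) :=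
      hT.isConnected.dist_triangle
    have h4 : G.dist (f a) (f c) = 1 := SimpleGraph.dist_eq_one_iff_adj.mpr h1
    rw [SimpleGraph.Walk.length_cons]
    omega

lemma IsRIso.dist_le (hT : G.IsTree) {u v w : V} {f g : V → V} (h : IsRIso G r u v f g)
    {c : V} (hc : c ∈ descendants G r u) (hw : w ∈ descendants G r c) :
    G.dist (f c) (f w) ≤ G.dist c w := by
  have hwu : w ∈ descendants G r u := (desc_trans hT hc hw).1
  have := map_walk_dist hT h.pres (geo hT c w) (fun z hz =>
    (desc_trans hT hc (support_geo_subset_desc hT hw hz)).1)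
  rwa [geo_length hT c w] at this

lemma IsRIso.dist_root_eq (hT : G.IsTree) {u v w : V} {f g : V → V}
    (h : IsRIso G r u v f g) (hw : w ∈ descendants G r u) :
    G.dist v (f w) = G.dist u w := by
  have h1 : G.dist (f u) (f w) ≤ G.dist u w :=
    h.dist_le hT (self_mem_descendants G r u) hw
  have h2 : G.dist (g v) (g (f w)) ≤ G.dist v (f w) :=
    h.symm.dist_le hT (self_mem_descendants G r v) (h.root ▸ h.mapsTo hw)
  rw [h.symm.root, h.leftInv w hw] at h2
  rw [h.root] at h1
  omega

lemma IsRIso.mapsToChild [Fintype V] (hT : G.IsTree) {u v : V} {f g : V → V}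
    (h : IsRIso G r u v f g) {c : V} (hc : c ∈ children G r u) :
    f c ∈ children G r v ∧ ∀ w ∈ descendants G r c, f w ∈ descendants G r (f c) := by
  obtain ⟨hcr, hadjc, hdistc⟩ := (mem_children hT).mp hc
  have hcd : c ∈ descendants G r u := child_mem_desc hT hc
  have hfc : f c ∈ descendants G r v := h.mapsTo hcd
  have hfcv : G.dist v (f c) = 1 := by
    rw [h.dist_root_eq hT hcd, SimpleGraph.dist_eq_one_iff_adj]; exact hadjc
  have hadjfc : G.Adj v (f c) := SimpleGraph.dist_eq_one_iff_adj.mp hfcv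
  have hrfc : G.dist r (f c) = G.dist r v + 1 := by
    rw [mem_descendants] at hfc; omega
  have hfcr : f c ≠ r := by
    intro h'; rw [h'] at hrfc; rw [SimpleGraph.dist_self] at hrfc; omega
  refine ⟨(mem_children hT).mpr ⟨hfcr, hadjfc, hrfc⟩, fun w hw => ?_⟩
  have hwu : w ∈ descendants G r u := desc_subset hT hc hw
  have hfw : f w ∈ descendants G r v := h.mapsTo hwu
  have h1 : G.dist (f c) (f w) ≤ G.dist c w := h.dist_le hT hcd hw
  have h2 : G.dist v (f w) = G.dist u w := h.dist_root_eq hT hwu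
  have h3 : G.dist u c + G.dist c w = G.dist u w := (desc_trans hT hcd hw).2
  have h4 : G.dist u c = 1 := SimpleGraph.dist_eq_one_iff_adj.mpr hadjc
  have h5 : G.dist r (f w) ≤ G.dist r (f c) + G.dist (f c) (f w) :=
    hT.isConnected.dist_triangle
  rw [mem_descendants] at hfw ⊢
  omega

lemma IsRIso.child [Fintype V] (hT : G.IsTree) {u v : V} {f g : V → V}
    (h : IsRIso G r u v f g) {c : V} (hc : c ∈ children G r u) :
    f c ∈ children G r v ∧ IsRIso G r c (f c) f g := by
  obtain ⟨hfc, hmt⟩ := h.mapsToChild hT hc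
  have hcd : c ∈ descendants G r u := child_mem_desc hT hc
  have hsub : descendants G r c ⊆ descendants G r u := desc_subset hT hc
  have hgfc : g (f c) = c := h.leftInv c hcd
  obtain ⟨hgc, hmt'⟩ := h.symm.mapsToChild hT hfc
  rw [hgfc] at hmt'
  have hsub' : descendants G r (f c) ⊆ descendants G r v := desc_subset hT hfc
  refine ⟨hfc, rfl, fun w hw => hmt w hw, fun x hx => hmt' x hx,
    fun w hw => h.leftInv w (hsub hw), fun x hx => h.rightInv x (hsub' hx),
    fun w hw x hx ha => h.pres w (hsub hw) x (hsub hx) ha,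
    fun w hw x hx ha => h.pres' w (hsub' hw) x (hsub' hx) ha⟩


/-- Gluing rooted isomorphisms of the children's subtrees into one of the whole subtree. -/
lemma glue [Fintype V] (hT : G.IsTree) {u v : V} (e e' : V → V)
    (he : ∀ c ∈ children G r u, e c ∈ children G r v)
    (he' : ∀ d ∈ children G r v, e' d ∈ children G r u)
    (hee' : ∀ c ∈ children G r u, e' (e c) = c)
    (he'e : ∀ d ∈ children G r v, e (e' d) = d)
    (hR : ∀ c ∈ children G r u, RIso G r c (e c)) :
    RIso G r u v := by
  choose! F Gm hFG using hR
  have hκex : ∃ κ : V → V, ∀ c ∈ children G r u, ∀ w ∈ descendants G r c, κ w = c := by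
    refine ⟨fun w =>
      if h : ∃ c, c ∈ children G r u ∧ w ∈ descendants G r c then h.choose else w, ?_⟩
    intro c hc w hwc
    have hex : ∃ c', c' ∈ children G r u ∧ w ∈ descendants G r c' := ⟨c, hc, hwc⟩
    dsimp only
    rw [dif_pos hex]
    exact desc_unique_child hT hex.choose_spec.1 hc hex.choose_spec.2 hwc
  obtain ⟨κ, hκeq⟩ := hκex
  have hκ'ex : ∃ κ' : V → V, ∀ d ∈ children G r v, ∀ x ∈ descendants G r d, κ' x = d := by
    refine ⟨fun x =>
      if h : ∃ d, d ∈ children G r v ∧ x ∈ descendants G r d then h.choose else x, ?_⟩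
    intro d hd x hxd
    have hex : ∃ d', d' ∈ children G r v ∧ x ∈ descendants G r d' := ⟨d, hd, hxd⟩
    dsimp only
    rw [dif_pos hex]
    exact desc_unique_child hT hex.choose_spec.1 hd hex.choose_spec.2 hxd
  obtain ⟨κ', hκ'eq⟩ := hκ'ex
  refine ⟨fun w => if w = u then v else F (κ w) w,
          fun x => if x = v then u else Gm (e' (κ' x)) x, ?_, ?_, ?_, ?_, ?_, ?_, ?_⟩
  · -- root
    simp
  · -- mapsTo
    intro w hw
    dsimp only
    split_ifs with h1
    · exact self_mem_descendants G r v
    · obtain ⟨c, hc, hwc⟩ := desc_child_of_ne hT hw h1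
      rw [hκeq c hc w hwc]
      exact desc_subset hT (he c hc) ((hFG c hc).mapsTo hwc)
  · -- mapsTo'
    intro x hx
    dsimp only
    split_ifs with h1
    · exact self_mem_descendants G r u
    · obtain ⟨d, hd, hxd⟩ := desc_child_of_ne hT hx h1
      rw [hκ'eq d hd x hxd]
      have hc := he' d hd
      have hxd' : x ∈ descendants G r (e (e' d)) := by rw [he'e d hd]; exact hxd
      exact desc_subset hT hc ((hFG (e' d) hc).mapsTo' hxd')
  · -- leftInv
    intro w hw
    by_cases hwu : w = u
    · rw [if_pos hwu, if_pos rfl, hwu]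
    · rw [if_neg hwu]
      obtain ⟨c, hc, hwc⟩ := desc_child_of_ne hT hw hwu
      rw [hκeq c hc w hwc]
      have hFc := hFG c hc
      have hFw : F c w ∈ descendants G r (e c) := hFc.mapsTo hwc
      have hne : F c w ≠ v := ne_of_mem_desc_child hT (he c hc) hFw
      rw [if_neg hne, hκ'eq (e c) (he c hc) _ hFw, hee' c hc]
      exact hFc.leftInv w hwc
  · -- rightInv
    intro x hx
    by_cases hxv : x = v
    · rw [if_pos hxv, if_pos rfl, hxv]
    · rw [if_neg hxv]
      obtain ⟨d, hd, hxd⟩ := desc_child_of_ne hT hx hxv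
      rw [hκ'eq d hd x hxd]
      have hc := he' d hd
      have hxd' : x ∈ descendants G r (e (e' d)) := by rw [he'e d hd]; exact hxd
      have hGx : Gm (e' d) x ∈ descendants G r (e' d) := (hFG (e' d) hc).mapsTo' hxd'
      have hne : Gm (e' d) x ≠ u := ne_of_mem_desc_child hT hc hGx
      rw [if_neg hne, hκeq (e' d) hc _ hGx]
      exact (hFG (e' d) hc).rightInv x hxd'
  · -- pres
    intro w hw x hx hadj
    rcases adj_structure hT hw hx hadj with ⟨hwu, hxc⟩ | ⟨hxu, hwc⟩ | ⟨c, hc, hwc, hxc⟩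
    · have hxne : x ≠ u := ne_of_mem_desc_child hT hxc (self_mem_descendants G r x)
      rw [if_pos hwu, if_neg hxne, hκeq x hxc x (self_mem_descendants G r x),
        (hFG x hxc).root]
      exact ((mem_children hT).mp (he x hxc)).2.1
    · have hwne : w ≠ u := ne_of_mem_desc_child hT hwc (self_mem_descendants G r w)
      rw [if_pos hxu, if_neg hwne, hκeq w hwc w (self_mem_descendants G r w),
        (hFG w hwc).root]
      exact (((mem_children hT).mp (he w hwc)).2.1).symm
    · have hwne : w ≠ u := ne_of_mem_desc_child hT hc hwc
      have hxne : x ≠ u := ne_of_mem_desc_child hT hc hxc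
      rw [if_neg hwne, if_neg hxne, hκeq c hc w hwc, hκeq c hc x hxc]
      exact (hFG c hc).pres w hwc x hxc hadj
  · -- pres'
    intro w hw x hx hadj
    rcases adj_structure hT hw hx hadj with ⟨hwv, hxd⟩ | ⟨hxv, hwd⟩ | ⟨d, hd, hwd, hxd⟩
    · have hxne : x ≠ v := ne_of_mem_desc_child hT hxd (self_mem_descendants G r x)
      have hc := he' x hxd
      have hx' : x ∈ descendants G r (e (e' x)) := by
        rw [he'e x hxd]; exact self_mem_descendants G r x
      have hroot : Gm (e' x) (e (e' x)) = e' x := ((hFG (e' x) hc).symm).root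
      rw [if_pos hwv, if_neg hxne, hκ'eq x hxd x (self_mem_descendants G r x)]
      rw [he'e x hxd] at hroot
      rw [hroot]
      exact ((mem_children hT).mp hc).2.1
    · have hwne : w ≠ v := ne_of_mem_desc_child hT hwd (self_mem_descendants G r w)
      have hc := he' w hwd
      have hroot : Gm (e' w) (e (e' w)) = e' w := ((hFG (e' w) hc).symm).root
      rw [if_pos hxv, if_neg hwne, hκ'eq w hwd w (self_mem_descendants G r w)]
      rw [he'e w hwd] at hroot
      rw [hroot]
      exact (((mem_children hT).mp hc).2.1).symm
    · have hwne : w ≠ v := ne_of_mem_desc_child hT hd hwd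
      have hxne : x ≠ v := ne_of_mem_desc_child hT hd hxd
      have hc := he' d hd
      have hw' : w ∈ descendants G r (e (e' d)) := by rw [he'e d hd]; exact hwd
      have hx' : x ∈ descendants G r (e (e' d)) := by rw [he'e d hd]; exact hxd
      rw [if_neg hwne, if_neg hxne, hκ'eq d hd w hwd, hκ'eq d hd x hxd]
      exact ((hFG (e' d) hc).symm).pres w hw' x hx' hadj


lemma children_empty_iff [Fintype V] (hT : G.IsTree) {u : V} :
    children G r u = ∅ ↔ descendants G r u = {u} := by
  constructor
  · intro h
    apply Set.eq_singleton_iff_unique_mem.mpr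
    refine ⟨self_mem_descendants G r u, fun w hw => ?_⟩
    by_contra hne
    obtain ⟨c, hc, _⟩ := desc_child_of_ne hT hw hne
    rw [h] at hc
    exact absurd hc (Finset.notMem_empty c)
  · intro h
    rw [Finset.eq_empty_iff_forall_notMem]
    intro c hc
    have h1 : c ∈ descendants G r u := child_mem_desc hT hc
    rw [h, Set.mem_singleton_iff] at h1
    have h2 := ((mem_children hT).mp hc).2.1
    rw [h1] at h2
    exact G.irrefl h2

lemma neighborSet_eq [Fintype V] (hT : G.IsTree) {u : V} (hu : u ≠ r) :
    {w | G.Adj u w} = insert (parent G r u) (↑(children G r u) : Set V) := by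
  ext w
  simp only [Set.mem_setOf_eq, Set.mem_insert_iff, Finset.mem_coe]
  constructor
  · intro hadj
    rcases adj_dist_cases hT hadj r with hd | hd
    · right
      refine (mem_children hT).mpr ⟨?_, hadj, hd⟩
      intro h
      rw [h, SimpleGraph.dist_self] at hd
      omega
    · left
      exact (parent_eq hT hadj.symm (by omega)).symm
  · intro h
    rcases h with h | h
    · rw [h]; exact (parent_spec hT hu).1.symm
    · exact ((mem_children hT).mp h).2.1

lemma isLeaf_iff [Fintype V] (hT : G.IsTree) {u : V} (hu : u ≠ r) :
    IsLeaf G u ↔ children G r u = ∅ := by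
  rw [IsLeaf, neighborSet_eq hT hu]
  have hpc : parent G r u ∉ (↑(children G r u) : Set V) := by
    intro h
    have h1 := ((mem_children hT).mp (Finset.mem_coe.mp h)).2.2
    have h2 := (parent_spec hT hu).2
    omega
  rw [Set.ncard_insert_of_notMem hpc (Set.toFinite _), Set.ncard_coe_finset]
  constructor
  · intro h
    exact Finset.card_eq_zero.mp (by omega)
  · intro h; rw [h]; simp

lemma compress_lt (S : Finset (List ℕ)) {s t : List ℕ} (hs : s ∈ S)
    (hlt : List.Lex (· < ·) s t) : compress S s < compress S t := by
  apply Finset.card_lt_card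
  rw [Finset.ssubset_iff_of_subset]
  · exact ⟨s, Finset.mem_filter.mpr ⟨hs, hlt⟩,
      fun hmem => irrefl_of (List.Lex (· < ·)) s (Finset.mem_filter.mp hmem).2⟩
  · intro x hx
    rw [Finset.mem_filter] at hx ⊢
    exact ⟨hx.1, List.lex_trans (fun h1 h2 => lt_trans h1 h2) hx.2 hlt⟩

lemma compress_injOn (S : Finset (List ℕ)) :
    ∀ s ∈ S, ∀ t ∈ S, compress S s = compress S t → s = t := by
  intro s hs t ht h
  have htri : List.Lex (· < ·) s t ∨ s = t ∨ List.Lex (· < ·) t s := trichotomous s t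
  rcases htri with hlt | heq | hgt
  · have := compress_lt S hs hlt; omega
  · exact heq
  · have := compress_lt S ht hgt; omega

lemma multiset_map_cancel {α β : Type*} {f : α → β} {P : α → Prop}
    (hf : ∀ s, P s → ∀ t, P t → f s = f t → s = t) :
    ∀ (s t : Multiset α), (∀ x ∈ s, P x) → (∀ x ∈ t, P x) → s.map f = t.map f → s = t := by
  intro s
  induction s using Multiset.induction with
  | empty =>
    intro t _ _ h
    rw [Multiset.map_zero] at h
    exact (Multiset.map_eq_zero.mp h.symm).symm
  | @cons a s ih =>
    intro t hs ht h
    rw [Multiset.map_cons] at h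
    have hfa : f a ∈ t.map f := by rw [← h]; exact Multiset.mem_cons_self _ _
    obtain ⟨b, hb, hfb⟩ := Multiset.mem_map.mp hfa
    have hab : a = b :=
      (hf b (ht b hb) a (hs a (Multiset.mem_cons_self a s)) hfb).symm
    have hb' : a ∈ t := hab ▸ hb
    have key : s.map f = (t.erase a).map f := by
      have h2 : t.map f = f a ::ₘ (t.erase a).map f := by
        rw [← Multiset.map_cons, Multiset.cons_erase hb']
      rw [h2] at h
      exact (Multiset.cons_inj_right _).mp h
    have := ih (t.erase a) (fun x hx => hs x (Multiset.mem_cons_of_mem hx))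
      (fun x hx => ht x (Multiset.mem_of_mem_erase hx)) key
    rw [this, Multiset.cons_erase hb']

lemma exists_matching {β : Type*} (f : V → β) :
    ∀ (C D : Finset V), C.val.map f = D.val.map f →
    ∃ e e' : V → V, (∀ c ∈ C, e c ∈ D) ∧ (∀ d ∈ D, e' d ∈ C) ∧ (∀ c ∈ C, e' (e c) = c) ∧
      (∀ d ∈ D, e (e' d) = d) ∧ (∀ c ∈ C, f (e c) = f c) := by
  intro C
  induction C using Finset.induction with
  | empty =>
    intro D h
    have h0 : D.val.map f = 0 := by rw [← h]; simp
    have hD : D = ∅ := Finset.val_eq_zero.mp (Multiset.map_eq_zero.mp h0)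
    subst hD
    exact ⟨id, id, by simp, by simp, by simp, by simp, by simp⟩
  | insert a C ha ih =>
    intro D h
    rw [Finset.insert_val_of_notMem ha, Multiset.map_cons] at h
    have hfa : f a ∈ D.val.map f := by rw [← h]; exact Multiset.mem_cons_self _ _
    obtain ⟨b, hb, hfb⟩ := Multiset.mem_map.mp hfa
    have hbD : b ∈ D := hb
    have hDval : D.val = b ::ₘ (D.erase b).val := by
      rw [Finset.erase_val, Multiset.cons_erase hb]
    rw [hDval, Multiset.map_cons, ← hfb] at h
    have h' : C.val.map f = (D.erase b).val.map f := (Multiset.cons_inj_right _).mp h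
    obtain ⟨e, e', h1, h2, h3, h4, h5⟩ := ih (D.erase b) h'
    refine ⟨fun x => if x = a then b else e x, fun y => if y = b then a else e' y,
      ?_, ?_, ?_, ?_, ?_⟩
    · intro c hc
      dsimp only
      by_cases hca : c = a
      · rw [if_pos hca]; exact hbD
      · rw [if_neg hca]
        have hcC : c ∈ C := (Finset.mem_insert.mp hc).resolve_left hca
        exact Finset.mem_of_mem_erase (h1 c hcC)
    · intro d hd
      dsimp only
      by_cases hdb : d = b
      · rw [if_pos hdb]; exact Finset.mem_insert_self a C
      · rw [if_neg hdb]
        exact Finset.mem_insert_of_mem (h2 d (Finset.mem_erase.mpr ⟨hdb, hd⟩))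
    · intro c hc
      dsimp only
      by_cases hca : c = a
      · rw [if_pos hca, if_pos rfl, hca]
      · rw [if_neg hca]
        have hcC : c ∈ C := (Finset.mem_insert.mp hc).resolve_left hca
        have hne : e c ≠ b := (Finset.mem_erase.mp (h1 c hcC)).1
        rw [if_neg hne]
        exact h3 c hcC
    · intro d hd
      dsimp only
      by_cases hdb : d = b
      · rw [if_pos hdb, if_pos rfl, hdb]
      · rw [if_neg hdb]
        have hdD : d ∈ D.erase b := Finset.mem_erase.mpr ⟨hdb, hd⟩
        have hne : e' d ≠ a := fun hh => ha (hh ▸ h2 d hdD)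
        rw [if_neg hne]
        exact h4 d hdD
    · intro c hc
      dsimp only
      by_cases hca : c = a
      · rw [if_pos hca, hca]; exact hfb
      · rw [if_neg hca]
        exact h5 c ((Finset.mem_insert.mp hc).resolve_left hca)

lemma dist_le_height [Fintype V] (w : V) : G.dist r w ≤ height G r :=
  Finset.le_sup (Finset.mem_univ w)

lemma lvl_child [Fintype V] (hT : G.IsTree) {u c : V} {i : ℕ}
    (hc : c ∈ children G r u) (hu : lvl G r u = i + 1) : lvl G r c = i := by
  have h1 : G.dist r c = G.dist r u + 1 := ((mem_children hT).mp hc).2.2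
  have h2 := dist_le_height (G := G) (r := r) c
  have h3 := dist_le_height (G := G) (r := r) u
  unfold lvl at *
  omega

lemma labelAt_mem [Fintype V] {i : ℕ} {c : V} (hc : lvl G r c = i) :
    labelAt G r i c ∈ (levelSet G r i).image (labelAt G r i) :=
  Finset.mem_image_of_mem _ (by simp [levelSet, hc])


lemma riso_iff_exists_iso (u v : V) :
    RIso G r u v ↔
      ∃ φ : (G.induce (descendants G r u)) ≃g (G.induce (descendants G r v)),
        φ ⟨u, self_mem_descendants G r u⟩ = ⟨v, self_mem_descendants G r v⟩ := by
  constructor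
  · rintro ⟨f, g, h⟩
    refine ⟨⟨⟨fun a => ⟨f a, h.mapsTo a.2⟩, fun b => ⟨g b, h.mapsTo' b.2⟩,
      fun a => Subtype.ext (h.leftInv a a.2), fun b => Subtype.ext (h.rightInv b b.2)⟩, ?_⟩,
      Subtype.ext h.root⟩
    intro a b
    simp only [Equiv.coe_fn_mk, SimpleGraph.comap_adj, Function.Embedding.coe_subtype]
    constructor
    · intro hadj
      have := h.pres' (f a) (h.mapsTo a.2) (f b) (h.mapsTo b.2) hadj
      rwa [h.leftInv a a.2, h.leftInv b b.2] at this
    · intro hadj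
      exact h.pres a a.2 b b.2 hadj
  · rintro ⟨φ, hφ⟩
    refine ⟨fun w => if h : w ∈ descendants G r u then (φ ⟨w, h⟩ : V) else w,
            fun x => if h : x ∈ descendants G r v then (φ.symm ⟨x, h⟩ : V) else x,
            ?_, ?_, ?_, ?_, ?_, ?_, ?_⟩
    · rw [dif_pos (self_mem_descendants G r u), hφ]
    · intro w hw
      dsimp only
      rw [dif_pos hw]
      exact (φ ⟨w, hw⟩).2
    · intro x hx
      dsimp only
      rw [dif_pos hx]
      exact (φ.symm ⟨x, hx⟩).2
    · intro w hw
      rw [dif_pos hw, dif_pos (φ ⟨w, hw⟩).2, Subtype.coe_eta, φ.symm_apply_apply]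
    · intro x hx
      rw [dif_pos hx, dif_pos (φ.symm ⟨x, hx⟩).2, Subtype.coe_eta, φ.apply_symm_apply]
    · intro w hw x hx hadj
      rw [dif_pos hw, dif_pos hx]
      have h1 : (G.induce (descendants G r u)).Adj ⟨w, hw⟩ ⟨x, hx⟩ := by
        simp only [SimpleGraph.comap_adj, Function.Embedding.coe_subtype]
        exact hadj
      have h2 := φ.map_rel_iff.mpr h1
      simpa only [SimpleGraph.comap_adj, Function.Embedding.coe_subtype] using h2
    · intro w hw x hx hadj
      rw [dif_pos hw, dif_pos hx]
      have h1 : (G.induce (descendants G r v)).Adj ⟨w, hw⟩ ⟨x, hx⟩ := by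
        simp only [SimpleGraph.comap_adj, Function.Embedding.coe_subtype]
        exact hadj
      have h2 := φ.symm.map_rel_iff.mpr h1
      simpa only [SimpleGraph.comap_adj, Function.Embedding.coe_subtype] using h2

lemma main_iff [Fintype V] (hT : G.IsTree) :
    ∀ (i : ℕ) (u v : V), lvl G r u = i → lvl G r v = i →
      (labelAt G r i u = labelAt G r i v ↔ RIso G r u v) := by
  intro i
  induction i with
  | zero =>
    intro u v hu hv
    have h1 := dist_le_height (G := G) (r := r) u
    have h2 := dist_le_height (G := G) (r := r) v
    have hdu : G.dist r u = height G r := by unfold lvl at hu; omega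
    have hdv : G.dist r v = height G r := by unfold lvl at hv; omega
    have hsing : ∀ w : V, G.dist r w = height G r → descendants G r w = {w} := by
      intro w hw
      apply Set.eq_singleton_iff_unique_mem.mpr
      refine ⟨self_mem_descendants G r w, fun x hx => ?_⟩
      rw [mem_descendants] at hx
      have h3 := dist_le_height (G := G) (r := r) x
      have h4 : G.dist w x = 0 := by omega
      exact (hT.isConnected.dist_eq_zero_iff.mp h4).symm
    exact ⟨fun _ => riso_of_singletons (hsing u hdu) (hsing v hdv), fun _ => by simp only [labelAt]⟩
  | succ i ih =>
    intro u v hu hv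
    by_cases huv : u = v
    · subst huv
      exact ⟨fun _ => riso_refl u, fun _ => rfl⟩
    have h1 := dist_le_height (G := G) (r := r) u
    have h2 := dist_le_height (G := G) (r := r) v
    have hdd : G.dist r u = G.dist r v := by unfold lvl at hu hv; omega
    have hur : u ≠ r := by
      intro h
      apply huv
      have h3 : G.dist r u = 0 := by rw [h, SimpleGraph.dist_self]
      have h4 : G.dist r v = 0 := by omega
      have h5 : r = v := hT.isConnected.dist_eq_zero_iff.mp h4
      rw [h, ← h5]
    have hvr : v ≠ r := by
      intro h
      apply huv
      rw [h, SimpleGraph.dist_self] at hdd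
      have h4 : G.dist r u = 0 := by omega
      have h5 : r = u := hT.isConnected.dist_eq_zero_iff.mp h4
      rw [h, ← h5]
    by_cases hlu : IsLeaf G u <;> by_cases hlv : IsLeaf G v
    · have hsu := (children_empty_iff hT).mp ((isLeaf_iff hT hur).mp hlu)
      have hsv := (children_empty_iff hT).mp ((isLeaf_iff hT hvr).mp hlv)
      simp only [labelAt, if_pos hlu, if_pos hlv]
      exact ⟨fun _ => riso_of_singletons hsu hsv, fun _ => trivial⟩
    · have hsu := (children_empty_iff hT).mp ((isLeaf_iff hT hur).mp hlu)
      have hcv : children G r v ≠ ∅ := fun hh => hlv ((isLeaf_iff hT hvr).mpr hh)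
      simp only [labelAt, if_pos hlu, if_neg hlv]
      constructor
      · intro hlab
        exfalso
        have hlen := congrArg List.length hlab
        simp only [List.length_nil, Multiset.length_sort, Multiset.card_map] at hlen
        exact hcv (Finset.card_eq_zero.mp hlen.symm)
      · rintro ⟨f, g, hfg⟩
        exact (hcv ((children_empty_iff hT).mpr (hfg.desc_singleton hsu))).elim
    · have hsv := (children_empty_iff hT).mp ((isLeaf_iff hT hvr).mp hlv)
      have hcu : children G r u ≠ ∅ := fun hh => hlu ((isLeaf_iff hT hur).mpr hh)
      simp only [labelAt, if_neg hlu, if_pos hlv]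
      constructor
      · intro hlab
        exfalso
        have hlen := congrArg List.length hlab
        simp only [List.length_nil, Multiset.length_sort, Multiset.card_map] at hlen
        exact hcu (Finset.card_eq_zero.mp hlen)
      · rintro ⟨f, g, hfg⟩
        exact (hcu ((children_empty_iff hT).mpr (hfg.symm.desc_singleton hsv))).elim
    · simp only [labelAt, if_neg hlu, if_neg hlv]
      constructor
      · intro hlab
        have hmul : ((children G r u).val.map (labelAt G r i)).map
              (compress ((levelSet G r i).image (labelAt G r i))) =
            ((children G r v).val.map (labelAt G r i)).map
              (compress ((levelSet G r i).image (labelAt G r i))) := by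
          have hcoe := congrArg (fun l : List ℕ => (l : Multiset ℕ)) hlab
          simp only [Multiset.sort_eq] at hcoe
          rw [Multiset.map_map, Multiset.map_map]
          exact hcoe
        have hlabeq : (children G r u).val.map (labelAt G r i) =
            (children G r v).val.map (labelAt G r i) := by
          apply multiset_map_cancel (compress_injOn ((levelSet G r i).image (labelAt G r i)))
            _ _ ?_ ?_ hmul
          · intro x hx
            obtain ⟨c, hc, rfl⟩ := Multiset.mem_map.mp hx
            exact labelAt_mem (lvl_child hT hc hu)
          · intro x hx
            obtain ⟨c, hc, rfl⟩ := Multiset.mem_map.mp hx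
            exact labelAt_mem (lvl_child hT hc hv)
        obtain ⟨e, e', he1, he2, he3, he4, he5⟩ :=
          exists_matching (labelAt G r i) (children G r u) (children G r v) hlabeq
        apply glue hT e e' he1 he2 he3 he4
        intro c hc
        exact (ih c (e c) (lvl_child hT hc hu) (lvl_child hT (he1 c hc) hv)).mp (he5 c hc).symm
      · rintro ⟨f, g, hfg⟩
        have key : ∀ c ∈ children G r u, labelAt G r i (f c) = labelAt G r i c := by
          intro c hc
          obtain ⟨hfc, hR'⟩ := hfg.child hT hc
          exact ((ih c (f c) (lvl_child hT hc hu) (lvl_child hT hfc hv)).mpr ⟨f, g, hR'⟩).symm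
        have himg : children G r v = (children G r u).image f := by
          ext d
          simp only [Finset.mem_image]
          constructor
          · intro hd
            obtain ⟨hgd, _⟩ := hfg.symm.child hT hd
            exact ⟨g d, hgd, hfg.rightInv d (child_mem_desc hT hd)⟩
          · rintro ⟨c, hc, rfl⟩
            exact (hfg.child hT hc).1
        have hinj : Set.InjOn f ↑(children G r u) := by
          intro c1 hc1 c2 hc2 heq
          have e1 := hfg.leftInv c1 (child_mem_desc hT (Finset.mem_coe.mp hc1))
          have e2 := hfg.leftInv c2 (child_mem_desc hT (Finset.mem_coe.mp hc2))
          rw [← e1, heq, e2]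
        apply congrArg (fun m => Multiset.sort m (· ≤ ·))
        rw [himg, Finset.image_val_of_injOn hinj, Multiset.map_map]
        apply Multiset.map_congr rfl
        intro c hc
        simp only [Function.comp_apply]
        rw [key c hc]

end TreeAux

/-- **Labels and descendant subtrees.** Two vertices `u` and `v` of a rooted tree lying at the
same level have equal compressed descendant labels if and only if the subtree induced on the
descendants of `u`, rooted at `u`, is isomorphic (as a rooted tree) to the subtree induced on
the descendants of `v`, rooted at `v`. -/
theorem cdl_eq_iff_descendant_subtrees_iso {V : Type*} [Fintype V]
    (G : SimpleGraph V) (r : V) (hT : G.IsTree) (u v : V)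
    (hlvl : lvl G r u = lvl G r v) :
    cdl G r u = cdl G r v ↔
      ∃ φ : (G.induce (descendants G r u)) ≃g (G.induce (descendants G r v)),
        φ ⟨u, self_mem_descendants G r u⟩ = ⟨v, self_mem_descendants G r v⟩ := by
  rw [cdl, cdl, hlvl]
  exact (main_iff hT (lvl G r v) u v hlvl rfl).trans (riso_iff_exists_iso u v)

end AHU
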